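/- Let p, ζ, d > 0 be real numbers and set c = (4p+d)/(2ζ). For real x define m(x) = log x − ½·log(log x) and J₀(x) = (m(x) − c·log(m(x)))^{d/ζ} (real powers). Then the ratio [x^{−2}·(log x)·J₀(x)·exp(2·J₀(x)^{ζ/d})] / (log x)^{−4p/ζ} tends to 1 as x → ∞. -/

import Mathlib

open Filter

/-- Rate calculation in the severely ill-posed case of Corollary 3.1: with
`m(x) = log x − ½·log log x`, `J₀(x) = (m(x) − c·log m(x))^{d/ζ}` and `c = (4p+d)/(2ζ)`,
the variance term `x^{−2}·(log x)·J₀(x)·exp(2·J₀(x)^{ζ/d})` is asymptotically equivalent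
to `(log x)^{−4p/ζ}`. -/
theorem adaptive_rate_asymptotics_severely_illposed
    (p ζ d : ℝ) (hp : 0 < p) (hζ : 0 < ζ) (hd : 0 < d)
    (c : ℝ) (hc : c = (4 * p + d) / (2 * ζ))
    (m J₀ : ℝ → ℝ)
    (hm : ∀ x : ℝ, m x = Real.log x - (1 / 2) * Real.log (Real.log x))
    (hJ₀ : ∀ x : ℝ, J₀ x = (m x - c * Real.log (m x)) ^ (d / ζ)) :
    Tendsto
      (fun x : ℝ =>
        (x ^ (-2 : ℝ) * Real.log x * J₀ x * Real.exp (2 * (J₀ x) ^ (ζ / d))) /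
          (Real.log x) ^ (-(4 * p / ζ)))
      atTop (nhds 1) := by
  have hζ' : ζ ≠ 0 := hζ.ne'
  have hd' : d ≠ 0 := hd.ne'
  set N : ℝ → ℝ := fun x => m x - c * Real.log (m x) with hNdef
  have hlog : Tendsto Real.log atTop atTop := Real.tendsto_log_atTop
  -- generic: y - a·log y → ∞
  have hsub : ∀ a : ℝ, Tendsto (fun y : ℝ => y - a * Real.log y) atTop atTop := by
    intro a
    have h1 : (fun y : ℝ => a * Real.log y) =o[atTop] (fun y : ℝ => y) := by
      exact Real.isLittleO_log_id_atTop.const_mul_left a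
    have h2 := h1.def (by norm_num : (0:ℝ) < 1/2)
    rw [tendsto_atTop]
    intro b
    filter_upwards [h2, eventually_ge_atTop (2*b), eventually_ge_atTop 0] with y hy hyb hy0
    have h4 : a * Real.log y ≤ (1/2) * y :=
      (le_abs_self _).trans (by rw [abs_mul]; simpa [abs_of_nonneg hy0] using hy)
    linarith
  have hMtop : Tendsto m atTop atTop := by
    have h := (hsub (1/2)).comp hlog
    exact h.congr fun x => (hm x).symm
  have hNtop : Tendsto N atTop atTop := (hsub c).comp hMtop
  have hdiv : Tendsto (fun y : ℝ => Real.log y / y) atTop (nhds 0) := by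
    have := Real.isLittleO_log_id_atTop.tendsto_div_nhds_zero
    simpa using this
  -- N/M → 1
  have h1 : Tendsto (fun x => N x / m x) atTop (nhds 1) := by
    have ha : Tendsto (fun x => 1 - c * (Real.log (m x) / m x)) atTop (nhds 1) := by
      have hb := (hdiv.comp hMtop).const_mul c
      have hcn : Tendsto (fun _ : ℝ => (1:ℝ)) atTop (nhds 1) := tendsto_const_nhds
      have := hcn.sub hb
      simpa using this
    refine ha.congr' ?_
    filter_upwards [hMtop.eventually_gt_atTop 0] with x hx
    simp only [hNdef]
    field_simp
  -- L/M → 1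
  have h2 : Tendsto (fun x => Real.log x / m x) atTop (nhds 1) := by
    have ha : Tendsto (fun x => 1 - (1/2) * (Real.log (Real.log x) / Real.log x)) atTop (nhds 1) := by
      have hb := (hdiv.comp hlog).const_mul (1/2 : ℝ)
      have hcn : Tendsto (fun _ : ℝ => (1:ℝ)) atTop (nhds 1) := tendsto_const_nhds
      have := hcn.sub hb
      simpa using this
    have hb : Tendsto (fun x => m x / Real.log x) atTop (nhds 1) := by
      refine ha.congr' ?_
      filter_upwards [hlog.eventually_gt_atTop 0] with x hx
      rw [hm x]
      field_simp
    have hc' := hb.inv₀ one_ne_zero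
    simp only [inv_one] at hc'
    exact hc'.congr fun x => by rw [inv_div]
  -- product of powers → 1
  have hmain : Tendsto (fun x => (N x / m x) ^ (d/ζ) * (Real.log x / m x) ^ (4*p/ζ))
      atTop (nhds 1) := by
    have ha : Tendsto (fun x => (N x / m x) ^ (d/ζ)) atTop (nhds ((1:ℝ) ^ (d/ζ))) :=
      h1.rpow_const (Or.inl one_ne_zero)
    have hb : Tendsto (fun x => (Real.log x / m x) ^ (4*p/ζ)) atTop (nhds ((1:ℝ) ^ (4*p/ζ))) :=
      h2.rpow_const (Or.inl one_ne_zero)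
    have := ha.mul hb
    simpa using this
  refine hmain.congr' ?_
  filter_upwards [eventually_gt_atTop 0, hlog.eventually_gt_atTop 0,
    hMtop.eventually_gt_atTop 0, hNtop.eventually_gt_atTop 0] with x hx hL hM hN
  have hJ : J₀ x = (N x) ^ (d/ζ) := hJ₀ x
  have hpow : (J₀ x) ^ (ζ/d) = N x := by
    rw [hJ, ← Real.rpow_mul hN.le]
    rw [show (d/ζ) * (ζ/d) = 1 by field_simp, Real.rpow_one]
  -- write everything as exponentials
  have e1 : x ^ (-2:ℝ) = Real.exp (Real.log x * (-2)) := Real.rpow_def_of_pos hx _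
  have e2 : Real.log x = Real.exp (Real.log (Real.log x)) := (Real.exp_log hL).symm
  have e3 : (N x) ^ (d/ζ) = Real.exp (Real.log (N x) * (d/ζ)) := Real.rpow_def_of_pos hN _
  have e4 : (Real.log x) ^ (-(4*p/ζ)) = Real.exp (Real.log (Real.log x) * (-(4*p/ζ))) :=
    Real.rpow_def_of_pos hL _
  have e5 : (N x / m x) ^ (d/ζ) = Real.exp ((Real.log (N x) - Real.log (m x)) * (d/ζ)) := by
    rw [Real.rpow_def_of_pos (div_pos hN hM), Real.log_div hN.ne' hM.ne']
  have e6 : (Real.log x / m x) ^ (4*p/ζ)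
      = Real.exp ((Real.log (Real.log x) - Real.log (m x)) * (4*p/ζ)) := by
    rw [Real.rpow_def_of_pos (div_pos hL hM), Real.log_div hL.ne' hM.ne']
  rw [e5, e6, hpow, hJ, e3, e4, e1]
  rw [show Real.exp (Real.log x * (-2)) * Real.log x
      = Real.exp (Real.log x * (-2) + Real.log (Real.log x)) by
    rw [Real.exp_add, Real.exp_log hL]]
  rw [← Real.exp_add, eq_div_iff (Real.exp_ne_zero _), ← Real.exp_add, ← Real.exp_add,
    ← Real.exp_add, Real.exp_eq_exp]
  have hmx : m x = Real.log x - (1/2) * Real.log (Real.log x) := hm x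
  have hnx : N x = m x - c * Real.log (m x) := rfl
  rw [hnx, hmx, hc]
  field_simp
  ring
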